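/- Let β : ℝ≥0 × ℝ≥0 → ℝ≥0 be differentiable in its second argument, normalized, and time-invariant. Then β satisfies the scalar differential equation ∂ₜβ(y,t) = ρ(β(y,t)) with β(y,0) = y for all y,t ≥ 0, where ρ(y) := ∂ₜβ(y,t)|_{t=0}. -/

import Mathlib

/-- A differentiable, normalized, time-invariant `β` satisfies the scalar ODE
`∂ₜβ(y,t) = ρ(β(y,t))` with `β(y,0) = y`, where `ρ(y) := ∂ₜβ(y,t)|_{t=0}`. -/
theorem normalized_timeInvariant_satisfies_ODE
    (β : ℝ → ℝ → ℝ) (ρ : ℝ → ℝ)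
    (hβpos : ∀ y t, 0 ≤ y → 0 ≤ t → 0 ≤ β y t)
    (hdiff : ∀ y t, 0 ≤ y → 0 ≤ t → DifferentiableAt ℝ (fun s => β y s) t)
    (hnorm : ∀ y, 0 ≤ y → β y 0 = y)
    (hcont : ContinuousOn (fun p : ℝ × ℝ => β p.1 p.2) {p | 0 ≤ p.1 ∧ 0 ≤ p.2})
    (hTI : ∀ y z t₀, 0 ≤ y → 0 ≤ z → 0 ≤ t₀ → β y t₀ = β z 0 →
      ∀ t, 0 ≤ t → β y (t₀ + t) = β z t)
    (hρ : ∀ y, 0 ≤ y → ρ y = deriv (fun s => β y s) 0) :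
    ∀ y t, 0 ≤ y → 0 ≤ t →
      deriv (fun s => β y s) t = ρ (β y t) ∧ β y 0 = y := by
  intro y t hy ht
  refine ⟨?_, hnorm y hy⟩
  set z := β y t with hzdef
  have hz : 0 ≤ z := hβpos y t hy ht
  have hsemi : ∀ s, 0 ≤ s → β y (t + s) = β z s :=
    hTI y z t hy hz ht (by rw [hnorm z hz]) 
  -- f s = β y (t+s), g s = β z s agree on Ici 0
  have hfdiff : DifferentiableAt ℝ (fun s => β y (t + s)) 0 := by
    have h := (hdiff y t hy ht)
    have h' : DifferentiableAt ℝ (fun s => β y s) (t + id 0) := by simpa using h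
    simpa [Function.comp_def] using h'.comp 0 (differentiableAt_id.const_add t)
  have hgdiff : DifferentiableAt ℝ (fun s => β z s) 0 := hdiff z 0 hz le_rfl
  have hU : UniqueDiffWithinAt ℝ (Set.Ici (0:ℝ)) 0 :=
    uniqueDiffOn_Ici 0 0 Set.self_mem_Ici
  have h1 : deriv (fun s => β y (t + s)) 0 = deriv (fun s => β y s) t := by
    rw [deriv_comp_const_add]
    simp
  have h2 : derivWithin (fun s => β y (t + s)) (Set.Ici 0) 0
      = derivWithin (fun s => β z s) (Set.Ici 0) 0 := by
    apply derivWithin_congr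
    · intro s hs; exact hsemi s hs
    · simpa using hsemi 0 le_rfl
  have h3 : derivWithin (fun s => β y (t + s)) (Set.Ici 0) 0
      = deriv (fun s => β y (t + s)) 0 := hfdiff.derivWithin hU
  have h4 : derivWithin (fun s => β z s) (Set.Ici 0) 0
      = deriv (fun s => β z s) 0 := hgdiff.derivWithin hU
  rw [← h1, ← h3, h2, h4, hρ z hz]
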